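/- Let p satisfy p(0)>0, p(0)+p(1)<1, μ(p)<1, with generating function g having radius of convergence ρ ∈ (1,∞) and g'(ρ) < 1 (hence g(ρ) < ρ). Let Y have law p_{ℕ,ρ}, i.e., E[f(Y)] = E[f(X)ρ^X]/g(ρ). Then p is non-generic for A ⊆ ℕ (with p(A)>0) if and only if E[Y | Y∈A] < (ρ − ρg'(ρ))/(ρ − g(ρ)). In particular, p is non-generic for {0}, and p is generic for {k} whenever p(k)>0 and k/ρ ≥ (ρ − ρg'(ρ))/(ρ − g(ρ)). -/

import Mathlib

open scoped Classical

/-- The normalizing constant `c_A(θ)`. -/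
noncomputable def cA (p : ℕ → ℝ) (A : Set ℕ) (θ : ℝ) : ℝ :=
  (θ - ∑' k : ℕ, (Aᶜ).indicator (fun k => θ ^ k * p k) k) /
    (θ * ∑' k : ℕ, A.indicator (fun k => θ ^ k * p k) k)

/-- The modified offspring distribution `p_{A,θ}`. -/
noncomputable def pMod (p : ℕ → ℝ) (A : Set ℕ) (θ : ℝ) : ℕ → ℝ :=
  fun k => if k ∈ A then cA p A θ * θ ^ k * p k else θ ^ ((k : ℤ) - 1) * p k

/-- `I_A`: the set of `θ > 0` for which `p_{A,θ}` is a probability distribution. -/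
def IA (p : ℕ → ℝ) (A : Set ℕ) : Set ℝ :=
  {θ | 0 < θ ∧ (∀ k, 0 ≤ pMod p A θ k) ∧ ∑' k, pMod p A θ k = 1}


open Filter Set


lemma aux_pow_sub_one_le {θ : ℝ} (hθ : 1 ≤ θ) (m : ℕ) :
    θ ^ (m + 1) - 1 ≤ ((m:ℝ) + 1) * θ ^ m * (θ - 1) := by
  induction m with
  | zero => simp
  | succ m ih =>
    have h1 : (1:ℝ) ≤ θ ^ (m+1) := one_le_pow₀ hθ
    have h0 : (0:ℝ) ≤ θ := le_trans zero_le_one hθ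
    have step : θ ^ (m+1+1) - 1 = θ * (θ ^ (m+1) - 1) + (θ-1) := by ring
    have t1 : θ * (θ ^ (m+1) - 1) ≤ θ * (((m:ℝ)+1) * θ ^ m * (θ-1)) :=
      mul_le_mul_of_nonneg_left ih h0
    have t2 : θ * (((m:ℝ)+1) * θ ^ m * (θ-1)) = ((m:ℝ)+1) * θ ^ (m+1) * (θ-1) := by ring
    have t3 : (θ-1) ≤ θ ^ (m+1) * (θ-1) := by nlinarith
    push_cast
    nlinarith [t1, t3]

lemma aux_tangent {θ : ℝ} (hθ : 1 ≤ θ) (k : ℕ) :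
    θ ^ k - 1 ≤ (k:ℝ) * θ ^ (k - 1) * (θ - 1) := by
  cases k with
  | zero => simp
  | succ m => simpa using aux_pow_sub_one_le hθ m

lemma aux_taylor2 {θ : ℝ} (hθ : 1 ≤ θ) (k : ℕ) :
    1 - θ ^ k + (θ - 1) * (k:ℝ) * θ ^ (k - 1)
      ≤ (k:ℝ) * ((k:ℝ) - 1) * θ ^ (k - 1 - 1) * (θ - 1) ^ 2 / 2 := by
  have h0 : (0:ℝ) ≤ θ := le_trans zero_le_one hθ
  have main : ∀ m : ℕ, 1 - θ^(m+2) + (θ-1)*((m:ℝ)+2)*θ^(m+1)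
      ≤ ((m:ℝ)+2)*((m:ℝ)+1)*θ^m*(θ-1)^2/2 := by
    intro m
    induction m with
    | zero => ring_nf; nlinarith
    | succ m ih =>
      have h1 : (1:ℝ) ≤ θ ^ (m+1) := one_le_pow₀ hθ
      have t1 : θ * (1 - θ^(m+2) + (θ-1) * ((m:ℝ)+2) * θ^(m+1))
          ≤ θ * (((m:ℝ)+2) * ((m:ℝ)+1) * θ^m * (θ-1)^2/2) :=
        mul_le_mul_of_nonneg_left ih h0
      have t2 : (θ-1) * (θ^(m+2) - 1) ≤ (θ-1) * (((m:ℝ)+2) * θ^(m+1) * (θ-1)) := by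
        have hg := aux_pow_sub_one_le hθ (m+1)
        have h10 : (0:ℝ) ≤ θ - 1 := by linarith
        push_cast at hg
        nlinarith [mul_le_mul_of_nonneg_left hg h10]
      push_cast
      ring_nf at t1 t2 ⊢
      linarith [t1, t2]
  match k with
  | 0 => simp
  | 1 => simp
  | (m+2) =>
    have h := main m
    push_cast
    ring_nf at h ⊢
    linarith [h]

lemma aux_ceil {ν t : ℝ} (hν : 0 ≤ ν) (ht : 0 < t) (ht1 : t ≤ 1) (k : ℕ) :
    ((k:ℝ) - ν) * t ^ k ≤ ((k:ℝ) - ν) * t ^ (Nat.ceil ν) := by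
  rcases le_or_gt (k:ℝ) ν with h | h
  · have hcast : (k:ℝ) ≤ (Nat.ceil ν : ℝ) := le_trans h (Nat.le_ceil ν)
    have hk : k ≤ Nat.ceil ν := by exact_mod_cast hcast
    have hp := pow_le_pow_of_le_one ht.le ht1 hk
    nlinarith
  · have hk : Nat.ceil ν ≤ k := Nat.ceil_le.2 h.le
    have hp := pow_le_pow_of_le_one ht.le ht1 hk
    nlinarith

lemma aux_summable_of_le {c : ℕ → ℝ} {x ρ : ℝ} (hc : ∀ k, 0 ≤ c k) (hx : 0 ≤ x)
    (hxρ : x ≤ ρ) (h : Summable fun k : ℕ => c k * ρ ^ k) :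
    Summable fun k : ℕ => c k * x ^ k :=
  Summable.of_nonneg_of_le (fun k : ℕ => mul_nonneg (hc k) (pow_nonneg hx k))
    (fun k : ℕ => mul_le_mul_of_nonneg_left (pow_le_pow_left₀ hx hxρ k) (hc k)) h

lemma aux_contOn {c : ℕ → ℝ} {ρ : ℝ} (hc : ∀ k, 0 ≤ c k)
    (h : Summable fun k : ℕ => c k * ρ ^ k) :
    ContinuousOn (fun x => ∑' k : ℕ, c k * x ^ k) (Set.Icc 0 ρ) := by
  refine (tendstoUniformlyOn_tsum h ?_).continuousOn (Filter.Eventually.frequently (Filter.Eventually.of_forall fun t => ?_))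
  · intro n x hx
    rw [Real.norm_eq_abs, abs_mul, abs_of_nonneg (hc n), abs_pow, abs_of_nonneg hx.1]
    exact mul_le_mul_of_nonneg_left (pow_le_pow_left₀ hx.1 hx.2 n) (hc n)
  · exact (continuous_finset_sum t fun k _ =>
      continuous_const.mul (continuous_pow k)).continuousOn

lemma aux_chord {x ρ : ℝ} (h1 : 1 ≤ x) (hxρ : x ≤ ρ) (hρ1 : 1 < ρ) (k : ℕ) :
    x ^ k ≤ (ρ - x) / (ρ - 1) + (x - 1) / (ρ - 1) * ρ ^ k := by
  have hρ0 : (0:ℝ) < ρ - 1 := by linarith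
  have ha : 0 ≤ (ρ - x)/(ρ-1) := div_nonneg (by linarith) hρ0.le
  have hb : 0 ≤ (x - 1)/(ρ-1) := div_nonneg (by linarith) hρ0.le
  have hab : (ρ - x)/(ρ-1) + (x - 1)/(ρ-1) = 1 := by field_simp; ring
  have hc := (convexOn_pow k).2 (Set.mem_Ici.2 zero_le_one)
    (Set.mem_Ici.2 (by linarith : (0:ℝ) ≤ ρ)) ha hb hab
  simp only [smul_eq_mul, one_pow, mul_one] at hc
  have hx : (ρ - x)/(ρ-1) + (x - 1)/(ρ-1) * ρ = x := by field_simp; ring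
  rwa [hx] at hc

lemma aux_sum_nat_cast_mul {q : ℕ → ℝ} {x : ℝ} (hx : x ≠ 0) (n : ℕ) :
    x * ∑ k ∈ Finset.range n, q k * ((k:ℝ) * x ^ (k-1))
      = ∑ k ∈ Finset.range n, (k:ℝ) * q k * x ^ k := by
  rw [Finset.mul_sum]
  refine Finset.sum_congr rfl fun k _ => ?_
  cases k with
  | zero => simp
  | succ m => simp only [Nat.add_sub_cancel]; ring

lemma aux_num_nonpos {x u u' w : ℝ} (hx : 1 < x) (e1 : (x-1)*u' ≤ u)
    (e2 : u ≤ (x-1)*u' + (x-1)^2*w/2) (hu' : 0 < u') (hw : 0 ≤ w) :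
    (1 * u' + x * -w) * u - x * u' * u' ≤ 0 := by
  have c1 : u * u' ≤ (x-1)*u'^2 + (x-1)^2 * w * u' / 2 :=
    by nlinarith [mul_le_mul_of_nonneg_right e2 hu'.le]
  have c2 : (x-1)^2 * w * u' / 2 ≤ x * (x-1) * u' * w := by
    nlinarith [mul_nonneg (mul_nonneg (by linarith : (0:ℝ) ≤ x - 1) hu'.le) hw]
  have c3 : x * (x-1) * u' * w ≤ x * u * w := by
    have h1 : 0 ≤ x * w := mul_nonneg (by linarith) hw
    nlinarith
  nlinarith [c1, c2, c3, sq_nonneg u']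

set_option maxHeartbeats 1000000 in
lemma aux_psi_mono {q : ℕ → ℝ} {ρ σ : ℝ}
    (hq : ∀ k, 0 ≤ q k) (hsq : Summable q) (hq1 : ∑' k : ℕ, q k = 1)
    (hρ1 : 1 < ρ) (hσ1 : 1 < σ) (hσρ : σ < ρ)
    (hsum : Summable (fun k : ℕ => q k * ρ ^ k))
    (hsum1 : Summable (fun k : ℕ => (k:ℝ) * q k * ρ ^ k))
    (hg'ρ : ∑' k : ℕ, (k:ℝ) * q k * ρ ^ k < ρ)
    (hgρ : ∑' k : ℕ, q k * ρ ^ k < ρ) :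
    (ρ - ∑' k : ℕ, (k:ℝ) * q k * ρ ^ k) * (σ - ∑' k : ℕ, q k * σ ^ k)
      ≤ (σ - ∑' k : ℕ, (k:ℝ) * q k * σ ^ k) * (ρ - ∑' k : ℕ, q k * ρ ^ k) := by
  have hρ0 : (0:ℝ) < ρ := by linarith
  have hσ0 : (0:ℝ) < σ := by linarith
  set Gρ := ∑' k : ℕ, q k * ρ ^ k with hGρdef
  set G1ρ := ∑' k : ℕ, (k:ℝ) * q k * ρ ^ k with hG1ρdef
  have hq1' : ∀ k : ℕ, 0 ≤ (k:ℝ) * q k := fun k : ℕ => mul_nonneg (Nat.cast_nonneg k) (hq k)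
  have hsumσ : Summable (fun k : ℕ => q k * σ ^ k) :=
    aux_summable_of_le hq hσ0.le (le_of_lt hσρ) hsum
  have hsum1σ : Summable (fun k : ℕ => (k:ℝ) * q k * σ ^ k) := by
    have := aux_summable_of_le (c := fun k : ℕ => (k:ℝ) * q k) hq1' hσ0.le (le_of_lt hσρ) hsum1
    simpa using this
  -- partial sums
  set s : ℕ → ℝ := fun n => ∑ k ∈ Finset.range n, q k with hsdef
  have hs_le_one : ∀ n, s n ≤ 1 := fun n => hq1 ▸ Summable.sum_le_tsum _ (fun i _ => hq i) hsq
  have hs_tendsto : Tendsto s atTop (nhds 1) := by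
    have := hsq.hasSum.tendsto_sum_nat
    rwa [hq1] at this
  -- lower bound for u on [σ, ρ]
  set ε : ℝ := (σ - 1) * (ρ - Gρ) / (ρ - 1) with hεdef
  have hε : 0 < ε := by
    apply div_pos (mul_pos (by linarith) (by linarith)); linarith
  have hGchord : ∀ x, 1 ≤ x → x ≤ ρ → (∑' k : ℕ, q k * x ^ k)
      ≤ (ρ - x)/(ρ-1) + (x-1)/(ρ-1) * Gρ := by
    intro x h1x hxρ
    have hsx : Summable (fun k : ℕ => q k * x ^ k) :=
      aux_summable_of_le hq (by linarith) hxρ hsum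
    have hrhs : Summable (fun k : ℕ => q k * ((ρ - x)/(ρ-1)) + q k * ρ ^ k * ((x-1)/(ρ-1))) :=
      (hsq.mul_right _).add (hsum.mul_right _)
    have := Summable.tsum_le_tsum (f := fun k : ℕ => q k * x ^ k)
      (g := fun k : ℕ => q k * ((ρ - x)/(ρ-1)) + q k * ρ ^ k * ((x-1)/(ρ-1)))
      (fun k : ℕ => by nlinarith [aux_chord h1x hxρ hρ1 k, hq k, mul_le_mul_of_nonneg_left (aux_chord h1x hxρ hρ1 k) (hq k)])
      hsx hrhs
    calc (∑' k : ℕ, q k * x ^ k) ≤ ∑' k : ℕ, (q k * ((ρ - x)/(ρ-1)) + q k * ρ ^ k * ((x-1)/(ρ-1))) := this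
      _ = (∑' k : ℕ, q k) * ((ρ - x)/(ρ-1)) + (∑' k : ℕ, q k * ρ ^ k) * ((x-1)/(ρ-1)) := by
          rw [Summable.tsum_add (hsq.mul_right _) (hsum.mul_right _), tsum_mul_right, tsum_mul_right]
      _ = (ρ - x)/(ρ-1) + (x-1)/(ρ-1) * Gρ := by rw [hq1]; ring
  have hulow : ∀ x, σ ≤ x → x ≤ ρ → ε ≤ x - ∑' k : ℕ, q k * x ^ k := by
    intro x hσx hxρ
    have h1x : 1 ≤ x := by linarith
    have := hGchord x h1x hxρ
    have hne : ρ - 1 ≠ 0 := by linarith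
    have key : x - ((ρ - x)/(ρ-1) + (x-1)/(ρ-1) * Gρ) = (x - 1) * (ρ - Gρ) / (ρ - 1) := by
      field_simp
      ring
    have : x - ∑' k : ℕ, q k * x ^ k ≥ (x - 1) * (ρ - Gρ) / (ρ - 1) := by linarith
    have hmono : ε ≤ (x - 1) * (ρ - Gρ) / (ρ - 1) := by
      rw [hεdef]
      apply div_le_div_of_nonneg_right ?_ (by linarith)
      · exact mul_le_mul_of_nonneg_right (by linarith) (by linarith)
    linarith
  set δ : ℝ := G1ρ / ρ with hδdef
  have hδ1 : δ < 1 := by rw [hδdef]; rw [div_lt_one hρ0]; exact hg'ρ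
  -- eventual facts
  have Ev1 : ∀ᶠ n in atTop, δ < s n := hs_tendsto.eventually (eventually_gt_nhds hδ1)
  have Ev2 : ∀ᶠ n in atTop, ρ * (1 - s n) < ε := by
    have h2 : (1:ℝ) - ε / ρ < 1 := by
      have : 0 < ε / ρ := div_pos hε hρ0
      linarith
    refine (hs_tendsto.eventually (eventually_gt_nhds h2)).mono fun n hn => ?_
    have : 1 - s n < ε / ρ := by linarith
    calc ρ * (1 - s n) < ρ * (ε / ρ) := by
          apply mul_lt_mul_of_pos_left this hρ0
      _ = ε := by field_simp
  -- the key finite-n inequality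
  have key : ∀ n, δ < s n → ρ * (1 - s n) < ε →
      (ρ * (s n - ∑ k ∈ Finset.range n, q k * ((k:ℝ) * ρ ^ (k-1)))) *
        (σ * s n - ∑ k ∈ Finset.range n, q k * σ ^ k)
      ≤ (σ * (s n - ∑ k ∈ Finset.range n, q k * ((k:ℝ) * σ ^ (k-1)))) *
        (ρ * s n - ∑ k ∈ Finset.range n, q k * ρ ^ k) := by
    intro n hn1 hn2
    set un : ℝ → ℝ := fun x => x * s n - ∑ k ∈ Finset.range n, q k * x ^ k with hundef
    set un' : ℝ → ℝ := fun x => s n - ∑ k ∈ Finset.range n, q k * ((k:ℝ) * x ^ (k-1)) with hun'def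
    set W : ℝ → ℝ := fun x =>
      ∑ k ∈ Finset.range n, q k * ((k:ℝ) * (((k-1:ℕ):ℝ) * x ^ (k-1-1))) with hWdef
    have hDun : ∀ x, HasDerivAt un (un' x) x := by
      intro x
      have h1 : HasDerivAt (fun y : ℝ => y * s n) (s n) x := by
        simpa using (hasDerivAt_id x).mul_const (s n)
      have h2 : HasDerivAt (fun y : ℝ => ∑ k ∈ Finset.range n, q k * y ^ k)
          (∑ k ∈ Finset.range n, q k * ((k:ℝ) * x ^ (k-1))) x :=
        HasDerivAt.fun_sum fun k _ => (hasDerivAt_pow k x).const_mul (q k)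
      simpa using h1.fun_sub h2
    have hDun' : ∀ x, HasDerivAt un' (-W x) x := by
      intro x
      have h2 : HasDerivAt (fun y : ℝ => ∑ k ∈ Finset.range n, q k * ((k:ℝ) * y ^ (k-1)))
          (W x) x := by
        refine HasDerivAt.fun_sum fun k _ => ?_
        exact ((hasDerivAt_pow (k-1) x).const_mul (k:ℝ)).const_mul (q k)
      simpa using (hasDerivAt_const x (s n)).fun_sub h2
    have hWnn : ∀ x : ℝ, 0 ≤ x → 0 ≤ W x := by
      intro x hx
      apply Finset.sum_nonneg
      intro k _
      have : (0:ℝ) ≤ ((k-1:ℕ):ℝ) * x ^ (k-1-1) := by positivity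
      have h2 : (0:ℝ) ≤ (k:ℝ) * (((k-1:ℕ):ℝ) * x ^ (k-1-1)) := by positivity
      exact mul_nonneg (hq k) h2
    -- expansion identities
    have hE1 : ∀ x : ℝ, 1 ≤ x → (x - 1) * un' x ≤ un x := by
      intro x hx
      have expand : un x - (x - 1) * un' x
          = ∑ k ∈ Finset.range n, q k * (1 - x ^ k + (x-1) * ((k:ℝ) * x ^ (k-1))) := by
        have e0 : un x - (x - 1) * un' x
            = (∑ k ∈ Finset.range n, q k) - (∑ k ∈ Finset.range n, q k * x ^ k)
              + (x-1) * ∑ k ∈ Finset.range n, q k * ((k:ℝ) * x ^ (k-1)) := by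
          simp only [hundef, hun'def, hsdef]; ring
        rw [e0, Finset.mul_sum, ← Finset.sum_sub_distrib, ← Finset.sum_add_distrib]
        exact Finset.sum_congr rfl fun k _ => by ring
      have hnn : 0 ≤ un x - (x - 1) * un' x := by
        rw [expand]
        apply Finset.sum_nonneg
        intro k _
        exact mul_nonneg (hq k) (by nlinarith [aux_tangent hx k])
      linarith
    have hE2 : ∀ x : ℝ, 1 ≤ x → un x ≤ (x - 1) * un' x + (x-1)^2 * W x / 2 := by
      intro x hx
      have expand : (x - 1) * un' x + (x-1)^2 * W x / 2 - un x
          = ∑ k ∈ Finset.range n, q k *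
            ((x-1)^2 * ((k:ℝ) * (((k-1:ℕ):ℝ) * x ^ (k-1-1))) / 2
              - (1 - x ^ k + (x-1) * ((k:ℝ) * x ^ (k-1)))) := by
        have split : ∑ k ∈ Finset.range n, q k *
              ((x-1)^2 * ((k:ℝ) * (((k-1:ℕ):ℝ) * x ^ (k-1-1))) / 2
                - (1 - x ^ k + (x-1) * ((k:ℝ) * x ^ (k-1))))
            = (∑ k ∈ Finset.range n, (x-1)^2 * (q k * ((k:ℝ) * (((k-1:ℕ):ℝ) * x ^ (k-1-1)))) / 2)
              - (∑ k ∈ Finset.range n, (x-1) * (q k * ((k:ℝ) * x ^ (k-1))))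
              - (∑ k ∈ Finset.range n, (q k - q k * x ^ k)) := by
          rw [← Finset.sum_sub_distrib, ← Finset.sum_sub_distrib]
          exact Finset.sum_congr rfl fun k _ => by ring
        rw [split, ← Finset.sum_div, ← Finset.mul_sum, ← Finset.mul_sum, Finset.sum_sub_distrib]
        simp only [hundef, hun'def, hsdef, hWdef]
        ring
      have hnn : 0 ≤ (x - 1) * un' x + (x-1)^2 * W x / 2 - un x := by
        rw [expand]
        apply Finset.sum_nonneg
        intro k _
        refine mul_nonneg (hq k) ?_
        have hT := aux_taylor2 hx k
        have hcast : (k:ℝ) * (((k-1:ℕ):ℝ) * x ^ (k-1-1)) = (k:ℝ) * ((k:ℝ)-1) * x ^ (k-1-1) := by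
          cases k with
          | zero => simp
          | succ m => push_cast [Nat.cast_sub (Nat.one_le_iff_ne_zero.2 (Nat.succ_ne_zero m))]; ring
        rw [hcast]
        nlinarith [hT]
      linarith
    -- positivity of un' on [σ, ρ]
    have hun' : ∀ x : ℝ, σ ≤ x → x ≤ ρ → 0 < un' x := by
      intro x hσx hxρ
      have hx0 : (0:ℝ) ≤ x := by linarith
      have hb : ∀ k : ℕ, q k * ((k:ℝ) * x ^ (k-1)) ≤ (k:ℝ) * q k * ρ ^ k / ρ := by
        intro k
        cases k with
        | zero => simp
        | succ m =>
          have h1 : x ^ m ≤ ρ ^ m := pow_le_pow_left₀ hx0 (by linarith) m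
          simp only [Nat.add_sub_cancel]
          rw [show ((m+1:ℕ):ℝ) * q (m+1) * ρ ^ (m+1) / ρ = ((m+1:ℕ):ℝ) * q (m+1) * ρ ^ m by
            rw [pow_succ]; field_simp]
          have hmq : (0:ℝ) ≤ ((m+1:ℕ):ℝ) * q (m+1) :=
            mul_nonneg (Nat.cast_nonneg _) (hq (m+1))
          have h2 := mul_le_mul_of_nonneg_left h1 hmq
          ring_nf at h2 ⊢
          linarith [h2]
      have hsum_le : ∑ k ∈ Finset.range n, q k * ((k:ℝ) * x ^ (k-1)) ≤ δ := by
        calc ∑ k ∈ Finset.range n, q k * ((k:ℝ) * x ^ (k-1))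
            ≤ ∑ k ∈ Finset.range n, (k:ℝ) * q k * ρ ^ k / ρ :=
              Finset.sum_le_sum fun k _ => hb k
          _ = (∑ k ∈ Finset.range n, (k:ℝ) * q k * ρ ^ k) / ρ := by rw [Finset.sum_div]
          _ ≤ G1ρ / ρ := by
              have hle : ∑ k ∈ Finset.range n, (k:ℝ) * q k * ρ ^ k ≤ G1ρ :=
                Summable.sum_le_tsum _ (fun i _ => mul_nonneg (hq1' i) (pow_nonneg hρ0.le i)) hsum1
              gcongr
          _ = δ := rfl
      simp only [hun'def]
      linarith
    -- positivity of un on [σ, ρ]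
    have hun : ∀ x : ℝ, σ ≤ x → x ≤ ρ → 0 < un x := by
      intro x hσx hxρ
      have hx0 : (0:ℝ) ≤ x := by linarith
      have hgn_le : ∑ k ∈ Finset.range n, q k * x ^ k ≤ ∑' k : ℕ, q k * x ^ k :=
        Summable.sum_le_tsum _ (fun i _ => mul_nonneg (hq i) (pow_nonneg hx0 i))
          (aux_summable_of_le hq hx0 hxρ hsum)
      have h1 : x * (1 - s n) ≤ ρ * (1 - s n) :=
        mul_le_mul_of_nonneg_right (by linarith) (by linarith [hs_le_one n])
      have h2 := hulow x hσx hxρ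
      simp only [hundef]
      nlinarith
    -- continuity
    have hcontun : Continuous un := by
      apply Continuous.sub (continuous_id.mul continuous_const)
      exact continuous_finset_sum _ fun k _ => continuous_const.mul (continuous_pow k)
    have hcontun' : Continuous un' := by
      apply Continuous.sub continuous_const
      exact continuous_finset_sum _ fun k _ =>
        continuous_const.mul (continuous_const.mul (continuous_pow (k-1)))
    -- antitonicity
    have hanti : AntitoneOn (fun y => y * un' y / un y) (Set.Icc σ ρ) := by
      apply antitoneOn_of_deriv_nonpos (convex_Icc σ ρ)
      · exact ((continuous_id.mul hcontun').continuousOn).div hcontun.continuousOn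
          (fun x hx => (hun x hx.1 hx.2).ne')
      · intro x hx
        rw [interior_Icc] at hx
        have hd := ((hasDerivAt_id x).fun_mul (hDun' x)).fun_div (hDun x)
          (hun x hx.1.le hx.2.le).ne'
        simp only [id_eq] at hd
        exact hd.differentiableAt.differentiableWithinAt
      · intro x hx
        rw [interior_Icc] at hx
        have hx1 : 1 < x := lt_trans hσ1 hx.1
        have hd := ((hasDerivAt_id x).fun_mul (hDun' x)).fun_div (hDun x)
          (hun x hx.1.le hx.2.le).ne'
        simp only [id_eq] at hd
        rw [hd.deriv]
        exact div_nonpos_of_nonpos_of_nonneg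
          (aux_num_nonpos hx1 (hE1 x hx1.le) (hE2 x hx1.le)
            (hun' x hx.1.le hx.2.le) (hWnn x (by linarith))) (sq_nonneg _)
    -- conclude the finite inequality
    have hmemσ : σ ∈ Set.Icc σ ρ := Set.mem_Icc.2 ⟨le_refl σ, hσρ.le⟩
    have hmemρ : ρ ∈ Set.Icc σ ρ := Set.mem_Icc.2 ⟨hσρ.le, le_refl ρ⟩
    have hA := hanti hmemσ hmemρ hσρ.le
    have hcross : (ρ * un' ρ) * un σ ≤ (σ * un' σ) * un ρ := by
      rw [div_le_div_iff₀ (hun ρ hσρ.le (le_refl ρ)) (hun σ (le_refl σ) hσρ.le)] at hA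
      exact hA
    simpa only [hundef, hun'def] using hcross
  -- pass to the limit
  have base : ∀ x : ℝ, 0 < x → x ≤ ρ →
      Tendsto (fun n => x * (s n - ∑ k ∈ Finset.range n, q k * ((k:ℝ) * x ^ (k-1))))
        atTop (nhds (x - ∑' k : ℕ, (k:ℝ) * q k * x ^ k)) := by
    intro x hx0 hxρ
    have hsum1x : Summable (fun k : ℕ => (k:ℝ) * q k * x ^ k) := by
      have := aux_summable_of_le (c := fun k : ℕ => (k:ℝ) * q k) hq1' hx0.le hxρ hsum1
      simpa using this
    have t1 : Tendsto (fun n => x * s n) atTop (nhds x) := by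
      simpa using hs_tendsto.const_mul x
    have t2 : Tendsto (fun n => ∑ k ∈ Finset.range n, (k:ℝ) * q k * x ^ k)
        atTop (nhds (∑' k : ℕ, (k:ℝ) * q k * x ^ k)) := hsum1x.hasSum.tendsto_sum_nat
    have := t1.sub t2
    refine this.congr fun n => ?_
    rw [mul_sub, aux_sum_nat_cast_mul hx0.ne' n]
  have baseu : ∀ x : ℝ, 0 < x → x ≤ ρ →
      Tendsto (fun n => x * s n - ∑ k ∈ Finset.range n, q k * x ^ k)
        atTop (nhds (x - ∑' k : ℕ, q k * x ^ k)) := by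
    intro x hx0 hxρ
    have hsx : Summable (fun k : ℕ => q k * x ^ k) := aux_summable_of_le hq hx0.le hxρ hsum
    have t1 : Tendsto (fun n => x * s n) atTop (nhds x) := by
      simpa using hs_tendsto.const_mul x
    exact (t1.sub hsx.hasSum.tendsto_sum_nat).congr fun n => rfl
  have L1 : Tendsto (fun n =>
      (ρ * (s n - ∑ k ∈ Finset.range n, q k * ((k:ℝ) * ρ ^ (k-1)))) *
        (σ * s n - ∑ k ∈ Finset.range n, q k * σ ^ k)) atTop
      (nhds ((ρ - G1ρ) * (σ - ∑' k : ℕ, q k * σ ^ k))) :=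
    (base ρ hρ0 (le_refl ρ)).mul (baseu σ hσ0 hσρ.le)
  have L2 : Tendsto (fun n =>
      (σ * (s n - ∑ k ∈ Finset.range n, q k * ((k:ℝ) * σ ^ (k-1)))) *
        (ρ * s n - ∑ k ∈ Finset.range n, q k * ρ ^ k)) atTop
      (nhds ((σ - ∑' k : ℕ, (k:ℝ) * q k * σ ^ k) * (ρ - Gρ))) :=
    (base σ hσ0 hσρ.le).mul (baseu ρ hρ0 (le_refl ρ))
  refine le_of_tendsto_of_tendsto L1 L2 ?_
  filter_upwards [Ev1, Ev2] with n h1 h2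
  exact key n h1 h2

noncomputable def auxS (p : ℕ → ℝ) (B : Set ℕ) (x : ℝ) : ℝ :=
  ∑' k : ℕ, B.indicator p k * x ^ k

noncomputable def auxT (p : ℕ → ℝ) (B : Set ℕ) (x : ℝ) : ℝ :=
  ∑' k : ℕ, ((k:ℝ) * B.indicator p k) * x ^ k

noncomputable def auxG (p : ℕ → ℝ) (x : ℝ) : ℝ := ∑' k : ℕ, p k * x ^ k

noncomputable def auxG1 (p : ℕ → ℝ) (x : ℝ) : ℝ := ∑' k : ℕ, (k:ℝ) * p k * x ^ k

lemma aux_ind_nonneg {p : ℕ → ℝ} (hp : ∀ k, 0 ≤ p k) (B : Set ℕ) (k : ℕ) :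
    0 ≤ B.indicator p k := Set.indicator_apply_nonneg (fun _ => hp k)

lemma aux_sumS {p : ℕ → ℝ} {ρ : ℝ} (hgρ : Summable fun k : ℕ => p k * ρ ^ k) (B : Set ℕ) :
    Summable (fun k : ℕ => B.indicator p k * ρ ^ k) := by
  refine (hgρ.indicator B).congr fun k => ?_
  by_cases h : k ∈ B <;> simp [Set.indicator_of_mem, Set.indicator_of_notMem, h]

lemma aux_sumT {p : ℕ → ℝ} {ρ : ℝ} (hG1 : Summable fun k : ℕ => (k:ℝ) * p k * ρ ^ k)
    (B : Set ℕ) : Summable (fun k : ℕ => ((k:ℝ) * B.indicator p k) * ρ ^ k) := by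
  refine (hG1.indicator B).congr fun k => ?_
  by_cases h : k ∈ B <;>
    simp [Set.indicator_of_mem, Set.indicator_of_notMem, h, mul_assoc]

lemma aux_bridgeS (p : ℕ → ℝ) (B : Set ℕ) (θ : ℝ) :
    ∑' k : ℕ, B.indicator (fun k => θ ^ k * p k) k = auxS p B θ := by
  refine tsum_congr fun k => ?_
  by_cases h : k ∈ B <;>
    simp [Set.indicator_of_mem, Set.indicator_of_notMem, h, auxS, mul_comm]

lemma aux_bridgeT (p : ℕ → ℝ) (B : Set ℕ) (θ : ℝ) :
    ∑' k : ℕ, B.indicator (fun k => (k:ℝ) * θ ^ k * p k) k = auxT p B θ := by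
  rw [auxT]
  refine tsum_congr fun k => ?_
  by_cases h : k ∈ B <;>
    simp [Set.indicator_of_mem, Set.indicator_of_notMem, h] <;> ring

lemma aux_splitS {p : ℕ → ℝ} {ρ θ : ℝ} (hθ0 : 0 ≤ θ) (hθρ : θ ≤ ρ)
    (hp : ∀ k, 0 ≤ p k) (hgρ : Summable fun k : ℕ => p k * ρ ^ k) (B : Set ℕ) :
    auxS p B θ + auxS p Bᶜ θ = auxG p θ := by
  rw [auxS, auxS, auxG, ← Summable.tsum_add
    (aux_summable_of_le (aux_ind_nonneg hp B) hθ0 hθρ (aux_sumS hgρ B))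
    (aux_summable_of_le (aux_ind_nonneg hp Bᶜ) hθ0 hθρ (aux_sumS hgρ Bᶜ))]
  refine tsum_congr fun k => ?_
  have := congrFun (Set.indicator_self_add_compl B p) k
  simp only [Pi.add_apply] at this
  rw [← add_mul, this]

lemma aux_splitT {p : ℕ → ℝ} {ρ θ : ℝ} (hθ0 : 0 ≤ θ) (hθρ : θ ≤ ρ)
    (hp : ∀ k, 0 ≤ p k) (hG1 : Summable fun k : ℕ => (k:ℝ) * p k * ρ ^ k) (B : Set ℕ) :
    auxT p B θ + auxT p Bᶜ θ = auxG1 p θ := by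
  have h1 : ∀ k : ℕ, 0 ≤ (k:ℝ) * B.indicator p k :=
    fun k => mul_nonneg (Nat.cast_nonneg k) (aux_ind_nonneg hp B k)
  have h2 : ∀ k : ℕ, 0 ≤ (k:ℝ) * Bᶜ.indicator p k :=
    fun k => mul_nonneg (Nat.cast_nonneg k) (aux_ind_nonneg hp Bᶜ k)
  rw [auxT, auxT, auxG1, ← Summable.tsum_add
    (aux_summable_of_le h1 hθ0 hθρ (aux_sumT hG1 B))
    (aux_summable_of_le h2 hθ0 hθρ (aux_sumT hG1 Bᶜ))]
  refine tsum_congr fun k => ?_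
  have := congrFun (Set.indicator_self_add_compl B p) k
  simp only [Pi.add_apply] at this
  have : (k:ℝ) * B.indicator p k + (k:ℝ) * Bᶜ.indicator p k = (k:ℝ) * p k := by
    rw [← mul_add, this]
  rw [← add_mul, this]

lemma aux_tangent_tsum {c : ℕ → ℝ} {θ : ℝ} (hc : ∀ k, 0 ≤ c k) (hθ1 : 1 ≤ θ)
    (hs1 : Summable (fun k : ℕ => c k * θ ^ k))
    (hs2 : Summable (fun k : ℕ => ((k:ℝ) * c k) * θ ^ k)) :
    ∑' k : ℕ, c k * θ ^ k ≤ (∑' k : ℕ, c k) + ((θ-1)/θ) * ∑' k : ℕ, ((k:ℝ) * c k) * θ ^ k := by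
  have hθ0 : (0:ℝ) < θ := lt_of_lt_of_le zero_lt_one hθ1
  have hsc : Summable c := by
    refine Summable.of_nonneg_of_le hc (fun k => ?_) hs1
    nlinarith [one_le_pow₀ (n := k) hθ1, hc k]
  have hterm : ∀ k : ℕ, c k * θ ^ k ≤ c k + ((θ-1)/θ) * (((k:ℝ) * c k) * θ ^ k) := by
    intro k
    cases k with
    | zero => simp
    | succ m =>
      have ht := aux_tangent hθ1 (m+1)
      simp only [Nat.add_sub_cancel] at ht
      have h1 : ((θ-1)/θ) * ((((m+1:ℕ):ℝ) * c (m+1)) * θ ^ (m+1))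
          = ((m+1:ℕ):ℝ) * c (m+1) * θ ^ m * (θ - 1) := by
        rw [pow_succ]; field_simp
      rw [h1]
      push_cast at ht ⊢
      nlinarith [hc (m+1), mul_le_mul_of_nonneg_left ht (hc (m+1))]
  calc ∑' k : ℕ, c k * θ ^ k
      ≤ ∑' k : ℕ, (c k + ((θ-1)/θ) * (((k:ℝ) * c k) * θ ^ k)) :=
        Summable.tsum_le_tsum hterm hs1 (hsc.add (hs2.mul_left _))
    _ = (∑' k : ℕ, c k) + ((θ-1)/θ) * ∑' k : ℕ, ((k:ℝ) * c k) * θ ^ k := by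
        rw [Summable.tsum_add hsc (hs2.mul_left _), tsum_mul_left]

lemma aux_chord_tsum {p : ℕ → ℝ} {ρ x : ℝ} (hp : ∀ k, 0 ≤ p k) (hρ1 : 1 < ρ)
    (h1x : 1 ≤ x) (hxρ : x ≤ ρ) (hpsum : ∑' k : ℕ, p k = 1)
    (hgρ : Summable (fun k : ℕ => p k * ρ ^ k)) :
    auxG p x ≤ (ρ - x)/(ρ-1) + (x-1)/(ρ-1) * auxG p ρ := by
  have hsp : Summable p := by
    by_contra h
    rw [tsum_eq_zero_of_not_summable h] at hpsum; norm_num at hpsum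
  have hsx : Summable (fun k : ℕ => p k * x ^ k) :=
    aux_summable_of_le hp (by linarith) hxρ hgρ
  have hrhs : Summable (fun k : ℕ => p k * ((ρ - x)/(ρ-1)) + p k * ρ ^ k * ((x-1)/(ρ-1))) :=
    (hsp.mul_right _).add (hgρ.mul_right _)
  have hle := Summable.tsum_le_tsum (f := fun k : ℕ => p k * x ^ k)
    (g := fun k : ℕ => p k * ((ρ - x)/(ρ-1)) + p k * ρ ^ k * ((x-1)/(ρ-1)))
    (fun k => by nlinarith [mul_le_mul_of_nonneg_left (aux_chord h1x hxρ hρ1 k) (hp k)])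
    hsx hrhs
  calc auxG p x ≤ ∑' k : ℕ, (p k * ((ρ - x)/(ρ-1)) + p k * ρ ^ k * ((x-1)/(ρ-1))) := hle
    _ = (∑' k : ℕ, p k) * ((ρ - x)/(ρ-1)) + (∑' k : ℕ, p k * ρ ^ k) * ((x-1)/(ρ-1)) := by
        rw [Summable.tsum_add (hsp.mul_right _) (hgρ.mul_right _), tsum_mul_right, tsum_mul_right]
    _ = (ρ - x)/(ρ-1) + (x-1)/(ρ-1) * auxG p ρ := by rw [hpsum, auxG]; ring

lemma aux_G_lt {p : ℕ → ℝ} {ρ θ : ℝ} (hp : ∀ k, 0 ≤ p k) (hρ1 : 1 < ρ)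
    (hθ1 : 1 < θ) (hθρ : θ ≤ ρ) (hpsum : ∑' k : ℕ, p k = 1)
    (hgρ : Summable (fun k : ℕ => p k * ρ ^ k)) (hGρ : auxG p ρ < ρ) :
    auxG p θ < θ := by
  have h := aux_chord_tsum hp hρ1 hθ1.le hθρ hpsum hgρ
  have h2 : (θ-1)/(ρ-1) * auxG p ρ < (θ-1)/(ρ-1) * ρ := by
    apply mul_lt_mul_of_pos_left hGρ (div_pos (by linarith) (by linarith))
  have hne : ρ - 1 ≠ 0 := by linarith
  have h3 : (ρ - θ)/(ρ-1) + (θ-1)/(ρ-1) * ρ = θ := by field_simp; ring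
  linarith

lemma aux_bernoulli_tsum {p : ℕ → ℝ} {θ : ℝ} (hp : ∀ k, 0 ≤ p k) (hθ0 : 0 < θ)
    (hsp : Summable p) (hμ : Summable (fun k : ℕ => (k:ℝ) * p k))
    (hGsum : Summable (fun k : ℕ => p k * θ ^ k)) :
    (∑' k : ℕ, p k) + (θ-1) * (∑' k : ℕ, (k:ℝ) * p k) ≤ auxG p θ := by
  have hterm : ∀ k : ℕ, p k + (θ-1) * ((k:ℝ) * p k) ≤ p k * θ ^ k := by
    intro k
    have hb := one_add_mul_le_pow (a := θ - 1) (by linarith) k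
    have : 1 + (k:ℝ) * (θ-1) ≤ θ ^ k := by
      have e : 1 + (θ - 1) = θ := by ring
      rw [e] at hb; exact hb
    nlinarith [hp k]
  calc (∑' k : ℕ, p k) + (θ-1) * (∑' k : ℕ, (k:ℝ) * p k)
      = ∑' k : ℕ, (p k + (θ-1) * ((k:ℝ) * p k)) := by
        rw [Summable.tsum_add hsp (hμ.mul_left _), tsum_mul_left]
    _ ≤ auxG p θ := Summable.tsum_le_tsum hterm (hsp.add (hμ.mul_left _)) hGsum

lemma aux_G1_le {p : ℕ → ℝ} {ρ θ : ℝ} (hp : ∀ k, 0 ≤ p k) (hθ0 : 0 < θ) (hθρ : θ ≤ ρ)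
    (hG1 : Summable (fun k : ℕ => (k:ℝ) * p k * ρ ^ k)) :
    auxG1 p θ ≤ (θ/ρ) * auxG1 p ρ := by
  have hρ0 : (0:ℝ) < ρ := lt_of_lt_of_le hθ0 hθρ
  have hterm : ∀ k : ℕ, (k:ℝ) * p k * θ ^ k ≤ (θ/ρ) * ((k:ℝ) * p k * ρ ^ k) := by
    intro k
    cases k with
    | zero => simp
    | succ m =>
      have h1 : θ ^ m ≤ ρ ^ m := pow_le_pow_left₀ hθ0.le hθρ m
      have h2 : (θ/ρ) * (((m+1:ℕ):ℝ) * p (m+1) * ρ ^ (m+1)) = ((m+1:ℕ):ℝ) * p (m+1) * (θ * ρ ^ m) := by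
        rw [pow_succ]; field_simp
      rw [h2, pow_succ]
      have key := mul_le_mul_of_nonneg_left h1
        (mul_nonneg (mul_nonneg (Nat.cast_nonneg (m+1) : (0:ℝ) ≤ ((m+1:ℕ):ℝ)) (hp (m+1))) hθ0.le)
      push_cast at key ⊢
      ring_nf at key ⊢
      linarith [key]
  have hsθ : Summable (fun k : ℕ => ((k:ℝ) * p k) * θ ^ k) :=
    aux_summable_of_le (fun k => mul_nonneg (Nat.cast_nonneg k) (hp k)) hθ0.le hθρ
      (hG1.congr fun k => by ring)
  calc auxG1 p θ ≤ ∑' k : ℕ, (θ/ρ) * ((k:ℝ) * p k * ρ ^ k) :=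
        Summable.tsum_le_tsum hterm (hsθ.congr fun k => by ring) (hG1.mul_left _)
    _ = (θ/ρ) * auxG1 p ρ := tsum_mul_left

lemma aux_G1_le_mu {p : ℕ → ℝ} {θ : ℝ} (hp : ∀ k, 0 ≤ p k) (hθ0 : 0 < θ) (hθ1 : θ ≤ 1)
    (hμ : Summable (fun k : ℕ => (k:ℝ) * p k)) :
    auxG1 p θ ≤ θ * ∑' k : ℕ, (k:ℝ) * p k := by
  have hterm : ∀ k : ℕ, (k:ℝ) * p k * θ ^ k ≤ θ * ((k:ℝ) * p k) := by
    intro k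
    cases k with
    | zero => simp
    | succ m =>
      have h1 : θ ^ m ≤ 1 := pow_le_one₀ hθ0.le hθ1
      rw [pow_succ]
      have key := mul_le_mul_of_nonneg_left h1
        (mul_nonneg (mul_nonneg (Nat.cast_nonneg (m+1) : (0:ℝ) ≤ ((m+1:ℕ):ℝ)) (hp (m+1))) hθ0.le)
      push_cast at key ⊢
      ring_nf at key ⊢
      linarith [key]
  have hsum : Summable (fun k : ℕ => (k:ℝ) * p k * θ ^ k) := by
    refine Summable.of_nonneg_of_le (fun k => ?_) hterm (hμ.mul_left θ)
    exact mul_nonneg (mul_nonneg (Nat.cast_nonneg k) (hp k)) (pow_nonneg hθ0.le k)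
  calc auxG1 p θ ≤ ∑' k : ℕ, θ * ((k:ℝ) * p k) := Summable.tsum_le_tsum hterm hsum (hμ.mul_left θ)
    _ = θ * ∑' k : ℕ, (k:ℝ) * p k := tsum_mul_left

lemma aux_tsum_singleton (f : ℕ → ℝ) (j : ℕ) :
    ∑' k : ℕ, ({j} : Set ℕ).indicator f k = f j := by
  rw [tsum_eq_single j (fun b hb => Set.indicator_of_notMem (by simpa using hb) f)]
  exact Set.indicator_of_mem rfl f

lemma aux_exists_pos {p : ℕ → ℝ} (hp : ∀ k, 0 ≤ p k) {A : Set ℕ}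
    (hA : 0 < ∑' k : ℕ, A.indicator p k) : ∃ k0, k0 ∈ A ∧ 0 < p k0 := by
  by_contra h
  push_neg at h
  have hz : ∀ k, A.indicator p k = 0 := by
    intro k
    by_cases hk : k ∈ A
    · rw [Set.indicator_of_mem hk]
      exact le_antisymm (h k hk) (hp k)
    · exact Set.indicator_of_notMem hk p
  rw [show A.indicator p = (fun _ => (0:ℝ)) from funext hz] at hA
  simp at hA

lemma aux_SA_pos {p : ℕ → ℝ} {ρ θ : ℝ} (hp : ∀ k, 0 ≤ p k) (hθ0 : 0 < θ) (hθρ : θ ≤ ρ)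
    (hgρ : Summable (fun k : ℕ => p k * ρ ^ k)) {A : Set ℕ}
    (hA : 0 < ∑' k : ℕ, A.indicator p k) : 0 < auxS p A θ := by
  obtain ⟨k0, hk0A, hk0⟩ := aux_exists_pos hp hA
  refine Summable.tsum_pos (aux_summable_of_le (aux_ind_nonneg hp A) hθ0.le hθρ (aux_sumS hgρ A))
    (fun k => mul_nonneg (aux_ind_nonneg hp A k) (pow_nonneg hθ0.le k)) k0 ?_
  rw [Set.indicator_of_mem hk0A]
  exact mul_pos hk0 (pow_pos hθ0 k0)

lemma aux_Ftrick {p : ℕ → ℝ} {ρ θ : ℝ} (hp : ∀ k, 0 ≤ p k)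
    (hθ0 : 0 < θ) (hθρ : θ ≤ ρ)
    (hgρ : Summable (fun k : ℕ => p k * ρ ^ k))
    (hG1 : Summable (fun k : ℕ => (k:ℝ) * p k * ρ ^ k))
    (A : Set ℕ) (hSρ : 0 < auxS p A ρ) :
    auxT p A θ * auxS p A ρ ≤ auxT p A ρ * auxS p A θ := by
  have hρ0 : (0:ℝ) < ρ := lt_of_lt_of_le hθ0 hθρ
  set ν : ℝ := auxT p A ρ / auxS p A ρ with hνdef
  have hTρ0 : 0 ≤ auxT p A ρ :=
    tsum_nonneg fun k => mul_nonneg (mul_nonneg (Nat.cast_nonneg k) (aux_ind_nonneg hp A k))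
      (pow_nonneg hρ0.le k)
  have hν0 : 0 ≤ ν := div_nonneg hTρ0 hSρ.le
  set t : ℝ := θ / ρ with htdef
  have ht0 : 0 < t := div_pos hθ0 hρ0
  have ht1 : t ≤ 1 := by rw [htdef, div_le_one hρ0]; exact hθρ
  set m : ℕ := Nat.ceil ν with hmdef
  have hθρt : θ = ρ * t := by rw [htdef]; field_simp
  -- summabilities
  have hindnn : ∀ k : ℕ, 0 ≤ (k:ℝ) * A.indicator p k :=
    fun k => mul_nonneg (Nat.cast_nonneg k) (aux_ind_nonneg hp A k)
  have hSθsum : Summable (fun k : ℕ => A.indicator p k * θ ^ k) :=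
    aux_summable_of_le (aux_ind_nonneg hp A) hθ0.le hθρ (aux_sumS hgρ A)
  have hTθsum : Summable (fun k : ℕ => ((k:ℝ) * A.indicator p k) * θ ^ k) :=
    aux_summable_of_le hindnn hθ0.le hθρ (aux_sumT hG1 A)
  have hSρsum : Summable (fun k : ℕ => A.indicator p k * ρ ^ k) := aux_sumS hgρ A
  have hTρsum : Summable (fun k : ℕ => ((k:ℝ) * A.indicator p k) * ρ ^ k) := aux_sumT hG1 A
  -- key termwise inequality
  have hterm : ∀ k : ℕ, ((k:ℝ) * A.indicator p k) * θ ^ k - ν * (A.indicator p k * θ ^ k)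
      ≤ t ^ m * (((k:ℝ) * A.indicator p k) * ρ ^ k - ν * (A.indicator p k * ρ ^ k)) := by
    intro k
    have hc := aux_ceil hν0 ht0 ht1 k
    have hb : 0 ≤ A.indicator p k * ρ ^ k :=
      mul_nonneg (aux_ind_nonneg hp A k) (pow_nonneg hρ0.le k)
    have := mul_le_mul_of_nonneg_right hc hb
    calc ((k:ℝ) * A.indicator p k) * θ ^ k - ν * (A.indicator p k * θ ^ k)
        = (((k:ℝ) - ν) * t ^ k) * (A.indicator p k * ρ ^ k) := by
          rw [hθρt, mul_pow]; ring
      _ ≤ (((k:ℝ) - ν) * t ^ m) * (A.indicator p k * ρ ^ k) := this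
      _ = t ^ m * (((k:ℝ) * A.indicator p k) * ρ ^ k - ν * (A.indicator p k * ρ ^ k)) := by ring
  have hsum_lhs : Summable (fun k : ℕ =>
      ((k:ℝ) * A.indicator p k) * θ ^ k - ν * (A.indicator p k * θ ^ k)) :=
    hTθsum.sub (hSθsum.mul_left ν)
  have hsum_rhs : Summable (fun k : ℕ =>
      t ^ m * (((k:ℝ) * A.indicator p k) * ρ ^ k - ν * (A.indicator p k * ρ ^ k))) :=
    (hTρsum.sub (hSρsum.mul_left ν)).mul_left _
  have hkey := Summable.tsum_le_tsum hterm hsum_lhs hsum_rhs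
  rw [Summable.tsum_sub hTθsum (hSθsum.mul_left ν), tsum_mul_left, tsum_mul_left,
    Summable.tsum_sub hTρsum (hSρsum.mul_left ν), tsum_mul_left] at hkey
  have hν : ν * auxS p A ρ = auxT p A ρ := by
    rw [hνdef]; field_simp
  have hfinal : auxT p A θ - ν * auxS p A θ ≤ 0 := by
    have : auxT p A ρ - ν * auxS p A ρ = 0 := by rw [hν]; ring
    calc auxT p A θ - ν * auxS p A θ ≤ t ^ m * (auxT p A ρ - ν * auxS p A ρ) := hkey
      _ = 0 := by rw [this, mul_zero]
  have h2 : auxT p A θ * auxS p A ρ ≤ ν * auxS p A θ * auxS p A ρ := by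
    nlinarith [hSρ]
  calc auxT p A θ * auxS p A ρ ≤ ν * auxS p A θ * auxS p A ρ := h2
    _ = auxT p A ρ * auxS p A θ := by rw [hνdef]; field_simp

open scoped Classical in
lemma aux_Mkey {p : ℕ → ℝ} {ρ : ℝ} (hp : ∀ k, 0 ≤ p k)
    (hgρ : Summable (fun k : ℕ => p k * ρ ^ k))
    (hG1 : Summable (fun k : ℕ => (k:ℝ) * p k * ρ ^ k))
    (A : Set ℕ) {θ : ℝ} (hθ0 : 0 < θ) (hθρ : θ ≤ ρ)
    (hSA : 0 < auxS p A θ) :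
    (∑' k : ℕ, pMod p A θ k) = 1 ∧
    (∑' k : ℕ, (k:ℝ) * pMod p A θ k) - 1
      = (auxT p A θ * (θ - auxG p θ) - auxS p A θ * (θ - auxG1 p θ)) / (θ * auxS p A θ) := by
  have hindnnA : ∀ k : ℕ, 0 ≤ (k:ℝ) * A.indicator p k :=
    fun k => mul_nonneg (Nat.cast_nonneg k) (aux_ind_nonneg hp A k)
  have hindnnAc : ∀ k : ℕ, 0 ≤ (k:ℝ) * (Aᶜ).indicator p k :=
    fun k => mul_nonneg (Nat.cast_nonneg k) (aux_ind_nonneg hp Aᶜ k)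
  have hSsum : Summable (fun k : ℕ => A.indicator p k * θ ^ k) :=
    aux_summable_of_le (aux_ind_nonneg hp A) hθ0.le hθρ (aux_sumS hgρ A)
  have hScsum : Summable (fun k : ℕ => (Aᶜ).indicator p k * θ ^ k) :=
    aux_summable_of_le (aux_ind_nonneg hp Aᶜ) hθ0.le hθρ (aux_sumS hgρ Aᶜ)
  have hTsum : Summable (fun k : ℕ => ((k:ℝ) * A.indicator p k) * θ ^ k) :=
    aux_summable_of_le hindnnA hθ0.le hθρ (aux_sumT hG1 A)
  have hTcsum : Summable (fun k : ℕ => ((k:ℝ) * (Aᶜ).indicator p k) * θ ^ k) :=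
    aux_summable_of_le hindnnAc hθ0.le hθρ (aux_sumT hG1 Aᶜ)
  have hca : cA p A θ = (θ - auxS p Aᶜ θ) / (θ * auxS p A θ) := by
    rw [cA, aux_bridgeS, aux_bridgeS]
  have hpm : ∀ k, pMod p A θ k
      = cA p A θ * (A.indicator p k * θ ^ k) + ((Aᶜ).indicator p k * θ ^ k) / θ := by
    intro k
    by_cases h : k ∈ A
    · rw [pMod, if_pos h, Set.indicator_of_mem h, Set.indicator_of_notMem (by simpa using h)]
      ring
    · rw [pMod, if_neg h, Set.indicator_of_notMem h, Set.indicator_of_mem (by simpa using h)]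
      rw [zpow_sub₀ hθ0.ne', zpow_one, zpow_natCast]
      ring
  have hval : (∑' k : ℕ, pMod p A θ k) = cA p A θ * auxS p A θ + auxS p Aᶜ θ / θ := by
    calc ∑' k : ℕ, pMod p A θ k
        = ∑' k : ℕ, (cA p A θ * (A.indicator p k * θ ^ k) + ((Aᶜ).indicator p k * θ ^ k) / θ) :=
          tsum_congr hpm
      _ = cA p A θ * auxS p A θ + auxS p Aᶜ θ / θ := by
          rw [Summable.tsum_add (hSsum.mul_left _) (hScsum.div_const θ), tsum_mul_left, tsum_div_const]
          rfl
  have h1 : (∑' k : ℕ, pMod p A θ k) = 1 := by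
    rw [hval, hca]
    field_simp
    ring
  refine ⟨h1, ?_⟩
  have hpm2 : ∀ k : ℕ, (k:ℝ) * pMod p A θ k
      = cA p A θ * (((k:ℝ) * A.indicator p k) * θ ^ k)
        + (((k:ℝ) * (Aᶜ).indicator p k) * θ ^ k) / θ := by
    intro k
    rw [hpm k]
    ring
  have hmean : (∑' k : ℕ, (k:ℝ) * pMod p A θ k)
      = cA p A θ * auxT p A θ + auxT p Aᶜ θ / θ := by
    calc ∑' k : ℕ, (k:ℝ) * pMod p A θ k
        = ∑' k : ℕ, (cA p A θ * (((k:ℝ) * A.indicator p k) * θ ^ k)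
            + (((k:ℝ) * (Aᶜ).indicator p k) * θ ^ k) / θ) := tsum_congr hpm2
      _ = cA p A θ * auxT p A θ + auxT p Aᶜ θ / θ := by
          rw [Summable.tsum_add (hTsum.mul_left _) (hTcsum.div_const θ), tsum_mul_left, tsum_div_const]
          rfl
  have e1 : auxS p Aᶜ θ = auxG p θ - auxS p A θ := by
    have := aux_splitS hθ0.le hθρ hp hgρ A; linarith
  have e2 : auxT p Aᶜ θ = auxG1 p θ - auxT p A θ := by
    have := aux_splitT hθ0.le hθρ hp hG1 A; linarith
  rw [hmean, hca, e1, e2]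
  field_simp
  ring


set_option maxHeartbeats 2000000 in
theorem stmt7 (p : ℕ → ℝ) (ρ : ℝ)
    (hp : ∀ k, 0 ≤ p k) (hpsum : ∑' k, p k = 1)
    (hp0 : 0 < p 0) (hp01 : p 0 + p 1 < 1)
    (hmean : Summable (fun k : ℕ => (k : ℝ) * p k))
    (hsub : ∑' k : ℕ, (k : ℝ) * p k < 1)
    (hρ1 : 1 < ρ)
    -- `ρ` is the (finite) radius of convergence of the generating function `g`
    (hrad : (∀ r : ℝ, 0 ≤ r → r < ρ → Summable (fun k : ℕ => p k * r ^ k))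
      ∧ (∀ r : ℝ, ρ < r → ¬ Summable (fun k : ℕ => p k * r ^ k)))
    (hgρ : Summable (fun k : ℕ => p k * ρ ^ k))
    (hg'sum : Summable (fun k : ℕ => (k : ℝ) * p k * ρ ^ (k - 1)))
    (hg' : ∑' k : ℕ, (k : ℝ) * p k * ρ ^ (k - 1) < 1) :
    -- non-genericity criterion via `Y` of law `p_{ℕ,ρ}`:
    (∀ A : Set ℕ, 0 < (∑' k : ℕ, A.indicator p k) →
      ((¬ ∃ θ ∈ IA p A, (∑' k : ℕ, (k : ℝ) * pMod p A θ k) = 1)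
        ↔ (∑' k : ℕ, A.indicator (fun k => (k : ℝ) * ρ ^ k * p k) k)
            / (∑' k : ℕ, A.indicator (fun k => ρ ^ k * p k) k)
          < (ρ - ρ * ∑' k : ℕ, (k : ℝ) * p k * ρ ^ (k - 1))
            / (ρ - ∑' k : ℕ, p k * ρ ^ k)))
    -- `p` is non-generic for `{0}`
    ∧ (¬ ∃ θ ∈ IA p {0}, (∑' k : ℕ, (k : ℝ) * pMod p {0} θ k) = 1)
    -- `p` is generic for `{k}` when `p(k) > 0` and `k/ρ` is at least the threshold
    ∧ (∀ k : ℕ, 0 < p k →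
        (ρ - ρ * ∑' j : ℕ, (j : ℝ) * p j * ρ ^ (j - 1)) / (ρ - ∑' j : ℕ, p j * ρ ^ j)
          ≤ (k : ℝ) / ρ →
        ∃ θ ∈ IA p {k}, (∑' j : ℕ, (j : ℝ) * pMod p {k} θ j) = 1) := by
  -- ===== global facts =====
  have hρ0 : (0:ℝ) < ρ := by linarith
  have hsp : Summable p := by
    by_contra h
    rw [tsum_eq_zero_of_not_summable h] at hpsum; norm_num at hpsum
  have hG1sum : Summable (fun k : ℕ => (k:ℝ) * p k * ρ ^ k) := by
    refine (hg'sum.mul_left ρ).congr fun k => ?_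
    cases k with
    | zero => simp
    | succ m => simp only [Nat.add_sub_cancel]; rw [pow_succ]; ring
  have hG1val : ρ * (∑' k : ℕ, (k:ℝ) * p k * ρ ^ (k - 1)) = auxG1 p ρ := by
    rw [auxG1, ← tsum_mul_left]
    refine tsum_congr fun k => ?_
    cases k with
    | zero => simp
    | succ m => simp only [Nat.add_sub_cancel]; rw [pow_succ]; ring
  have hG1ρlt : auxG1 p ρ < ρ := by
    rw [← hG1val]
    nlinarith [hg']
  have hμ0 : (0:ℝ) ≤ ∑' k : ℕ, (k:ℝ) * p k :=
    tsum_nonneg fun k => mul_nonneg (Nat.cast_nonneg k) (hp k)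
  have hGρlt : auxG p ρ < ρ := by
    have h := aux_tangent_tsum (c := p) hp hρ1.le hgρ (hG1sum.congr (fun k => by ring))
    have h2 : ((ρ-1)/ρ) * (∑' k : ℕ, ((k:ℝ) * p k) * ρ ^ k) < ((ρ-1)/ρ) * ρ := by
      apply mul_lt_mul_of_pos_left _ (div_pos (by linarith) hρ0)
      calc (∑' k : ℕ, ((k:ℝ) * p k) * ρ ^ k) = auxG1 p ρ := by rw [auxG1]
        _ < ρ := hG1ρlt
    have h3 : ((ρ-1)/ρ) * ρ = ρ - 1 := by field_simp
    have h4 : auxG p ρ = ∑' k : ℕ, p k * ρ ^ k := rfl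
    rw [hpsum] at h
    rw [h4]
    linarith
  have hTH : (ρ - ρ * ∑' k : ℕ, (k:ℝ) * p k * ρ ^ (k - 1)) / (ρ - ∑' k : ℕ, p k * ρ ^ k)
      = (ρ - auxG1 p ρ) / (ρ - auxG p ρ) := by rw [hG1val]; rfl
  have hTHpos : 0 < (ρ - auxG1 p ρ) / (ρ - auxG p ρ) :=
    div_pos (by linarith) (by linarith)
  have hG_one : auxG p 1 = 1 := by
    rw [auxG, tsum_congr (fun k : ℕ => by rw [one_pow, mul_one] : ∀ k : ℕ, p k * 1 ^ k = p k)]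
    exact hpsum
  have hG1_one : auxG1 p 1 = ∑' k : ℕ, (k:ℝ) * p k := by
    rw [auxG1]
    exact tsum_congr fun k : ℕ => by rw [one_pow, mul_one]
  -- ===== the main criterion =====
  have hmain : ∀ A : Set ℕ, 0 < (∑' k : ℕ, A.indicator p k) →
      ((∃ θ ∈ IA p A, (∑' k : ℕ, (k : ℝ) * pMod p A θ k) = 1) ↔
        (ρ - auxG1 p ρ) / (ρ - auxG p ρ) ≤ auxT p A ρ / auxS p A ρ) := by
    intro A hA
    have hSρpos : 0 < auxS p A ρ := aux_SA_pos hp hρ0 le_rfl hgρ hA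
    constructor
    · -- existence of a solution forces the inequality
      rintro ⟨θ, ⟨hθpos, hnn, hsum1⟩, hM⟩
      rcases le_or_gt θ 1 with hθ1 | hθ1
      · -- impossible: θ ≤ 1
        exfalso
        have hθρ : θ ≤ ρ := by linarith
        have hSθ := aux_SA_pos hp hθpos hθρ hgρ hA
        obtain ⟨_, hMform⟩ := aux_Mkey hp hgρ hG1sum A hθpos hθρ hSθ
        have hG1θ : auxG1 p θ ≤ θ * ∑' k : ℕ, (k:ℝ) * p k := aux_G1_le_mu hp hθpos hθ1 hmean
        have hGθ : θ ≤ auxG p θ := by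
          have hsθ : Summable (fun k : ℕ => p k * θ ^ k) :=
            aux_summable_of_le hp hθpos.le hθρ hgρ
          have hb := aux_bernoulli_tsum hp hθpos hsp hmean hsθ
          rw [hpsum] at hb
          nlinarith [hsub]
        have hTθ0 : 0 ≤ auxT p A θ :=
          tsum_nonneg fun k => mul_nonneg
            (mul_nonneg (Nat.cast_nonneg k) (aux_ind_nonneg hp A k)) (pow_nonneg hθpos.le k)
        have hnum : auxT p A θ * (θ - auxG p θ) - auxS p A θ * (θ - auxG1 p θ) < 0 := by
          have h1 : auxT p A θ * (θ - auxG p θ) ≤ 0 :=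
            mul_nonpos_of_nonneg_of_nonpos hTθ0 (by linarith)
          have h2 : 0 < auxS p A θ * (θ - auxG1 p θ) := by
            apply mul_pos hSθ
            nlinarith [hsub, hθpos]
          linarith
        have hlt : (∑' k : ℕ, (k:ℝ) * pMod p A θ k) - 1 < 0 := by
          rw [hMform]
          exact div_neg_of_neg_of_pos hnum (mul_pos hθpos hSθ)
        rw [hM] at hlt; norm_num at hlt
      rcases le_or_gt θ ρ with hθρ | hθρ
      · -- the main case 1 < θ ≤ ρ
        have hθpos' : (0:ℝ) < θ := by linarith
        have hSθ := aux_SA_pos hp hθpos' hθρ hgρ hA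
        obtain ⟨_, hMform⟩ := aux_Mkey hp hgρ hG1sum A hθpos' hθρ hSθ
        have hzero : auxT p A θ * (θ - auxG p θ) - auxS p A θ * (θ - auxG1 p θ) = 0 := by
          have h2 : (∑' k : ℕ, (k:ℝ) * pMod p A θ k) - 1 = 0 := by rw [hM]; ring
          rw [hMform] at h2
          rcases div_eq_zero_iff.mp h2 with h | h
          · exact h
          · exact absurd h (by positivity)
        have hGθ : auxG p θ < θ := aux_G_lt hp hρ1 hθ1 hθρ hpsum hgρ hGρlt
        have hG1θ : auxG1 p θ < θ := by
          have h1 := aux_G1_le hp hθpos' hθρ hG1sum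
          have h2 : (θ/ρ) * auxG1 p ρ < (θ/ρ) * ρ :=
            mul_lt_mul_of_pos_left hG1ρlt (div_pos hθpos' hρ0)
          have h3 : (θ/ρ) * ρ = θ := by field_simp
          linarith
        have hpsi : (ρ - auxG1 p ρ) * (θ - auxG p θ) ≤ (θ - auxG1 p θ) * (ρ - auxG p ρ) := by
          rcases eq_or_lt_of_le hθρ with heq | hlt
          · rw [heq]
          · exact aux_psi_mono hp hsp hpsum hρ1 hθ1 hlt hgρ hG1sum hG1ρlt hGρlt
        have hF := aux_Ftrick hp hθpos' hθρ hgρ hG1sum A hSρpos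
        rw [div_le_div_iff₀ (by linarith) hSρpos]
        -- goal : (ρ - auxG1 p ρ) * auxS p A ρ ≤ auxT p A ρ * (ρ - auxG p ρ)
        have hX : 0 < (θ - auxG p θ) * auxS p A θ := mul_pos (by linarith) hSθ
        have c1 : (ρ - auxG1 p ρ) * auxS p A ρ * ((θ - auxG p θ) * auxS p A θ)
            ≤ (θ - auxG1 p θ) * (ρ - auxG p ρ) * auxS p A ρ * auxS p A θ := by
          nlinarith [mul_le_mul_of_nonneg_right hpsi (mul_nonneg hSρpos.le hSθ.le)]
        have c2 : (θ - auxG1 p θ) * (ρ - auxG p ρ) * auxS p A ρ * auxS p A θ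
            = (ρ - auxG p ρ) * auxS p A ρ * (auxT p A θ * (θ - auxG p θ)) := by
          linear_combination (auxG p ρ - ρ) * auxS p A ρ * hzero
        have c3 : (ρ - auxG p ρ) * auxS p A ρ * (auxT p A θ * (θ - auxG p θ))
            ≤ auxT p A ρ * (ρ - auxG p ρ) * ((θ - auxG p θ) * auxS p A θ) := by
          nlinarith [mul_le_mul_of_nonneg_right hF
            (mul_nonneg (by linarith : (0:ℝ) ≤ ρ - auxG p ρ)
              (by linarith : (0:ℝ) ≤ θ - auxG p θ))]
        have := le_of_mul_le_mul_right (by linarith [c1, c2, c3] :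
          (ρ - auxG1 p ρ) * auxS p A ρ * ((θ - auxG p θ) * auxS p A θ)
            ≤ auxT p A ρ * (ρ - auxG p ρ) * ((θ - auxG p θ) * auxS p A θ)) hX
        exact this
      · -- impossible: θ > ρ
        exfalso
        have hθ0 : (0:ℝ) < θ := by linarith
        have hsumpm : Summable (pMod p A θ) := by
          by_contra h
          rw [tsum_eq_zero_of_not_summable h] at hsum1; norm_num at hsum1
        have hScsum : Summable (fun k : ℕ => (Aᶜ).indicator p k * θ ^ k) := by
          refine ((hsumpm.indicator Aᶜ).mul_left θ).congr fun k => ?_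
          by_cases h : k ∈ A
          · rw [Set.indicator_of_notMem (by simpa using h),
              Set.indicator_of_notMem (by simpa using h)]
            ring
          · rw [Set.indicator_of_mem (by simpa using h), Set.indicator_of_mem (by simpa using h)]
            rw [pMod, if_neg h, zpow_sub₀ hθ0.ne', zpow_one, zpow_natCast]
            field_simp
        by_cases hsa : Summable (fun k : ℕ => A.indicator p k * θ ^ k)
        · refine hrad.2 θ hθρ ((hsa.add hScsum).congr fun k => ?_)
          have := congrFun (Set.indicator_self_add_compl A p) k
          simp only [Pi.add_apply] at this
          rw [← add_mul, this]
        · have hSA0 : (∑' k : ℕ, A.indicator (fun j => θ ^ j * p j) k) = 0 := by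
            apply tsum_eq_zero_of_not_summable
            intro hcon
            apply hsa
            refine hcon.congr fun k => ?_
            by_cases h : k ∈ A
            · rw [Set.indicator_of_mem h, Set.indicator_of_mem h]; ring
            · rw [Set.indicator_of_notMem h, Set.indicator_of_notMem h]; ring
          have hca0 : cA p A θ = 0 := by rw [cA, hSA0, mul_zero, div_zero]
          have hpmc : ∀ k, pMod p A θ k = (Aᶜ).indicator p k * θ ^ k / θ := by
            intro k
            by_cases h : k ∈ A
            · rw [pMod, if_pos h, hca0, Set.indicator_of_notMem (by simpa using h)]
              ring
            · rw [pMod, if_neg h, Set.indicator_of_mem (by simpa using h),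
                zpow_sub₀ hθ0.ne', zpow_one, zpow_natCast]
              ring
          have hSc : (∑' k : ℕ, (Aᶜ).indicator p k * θ ^ k) = θ := by
            have h1 : (∑' k : ℕ, (Aᶜ).indicator p k * θ ^ k / θ) = 1 := by
              rw [← tsum_congr hpmc]; exact hsum1
            rw [tsum_div_const] at h1
            field_simp at h1
            linarith [h1]
          have hTc : Summable (fun k : ℕ => ((k:ℝ) * (Aᶜ).indicator p k) * θ ^ k) := by
            have hms : Summable (fun k : ℕ => (k:ℝ) * pMod p A θ k) := by
              by_contra h
              rw [tsum_eq_zero_of_not_summable h] at hM; norm_num at hM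
            refine ((hms.mul_left θ).congr fun k => ?_)
            rw [hpmc k]
            field_simp
          have hTcval : (∑' k : ℕ, ((k:ℝ) * (Aᶜ).indicator p k) * θ ^ k) = θ := by
            have h1 : (∑' k : ℕ, ((k:ℝ) * (Aᶜ).indicator p k) * θ ^ k / θ) = 1 := by
              rw [← tsum_congr (fun k => by rw [hpmc k]; ring :
                ∀ k : ℕ, (k:ℝ) * pMod p A θ k = ((k:ℝ) * (Aᶜ).indicator p k) * θ ^ k / θ)]
              exact hM
            rw [tsum_div_const] at h1
            field_simp at h1
            linarith [h1]
          have htang := aux_tangent_tsum (aux_ind_nonneg hp Aᶜ) (by linarith : 1 ≤ θ)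
            hScsum hTc
          rw [hSc, hTcval] at htang
          have h2 : ((θ-1)/θ) * θ = θ - 1 := by field_simp
          have hsplitp : (∑' k : ℕ, A.indicator p k) + (∑' k : ℕ, (Aᶜ).indicator p k) = 1 := by
            rw [← Summable.tsum_add (hsp.indicator A) (hsp.indicator Aᶜ), ← hpsum]
            refine tsum_congr fun k => ?_
            have := congrFun (Set.indicator_self_add_compl A p) k
            simpa using this
          linarith
    · -- the inequality gives existence via IVT
      intro hth
      have hindnnA : ∀ k : ℕ, 0 ≤ (k:ℝ) * A.indicator p k :=
        fun k => mul_nonneg (Nat.cast_nonneg k) (aux_ind_nonneg hp A k)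
      have hHcont : ContinuousOn
          (fun x => auxT p A x * (x - auxG p x) - auxS p A x * (x - auxG1 p x))
          (Icc 1 ρ) := by
        have hsub1 : Icc (1:ℝ) ρ ⊆ Icc 0 ρ := Icc_subset_Icc (by norm_num) le_rfl
        have h1 : ContinuousOn (fun x => auxS p A x) (Icc 0 ρ) :=
          aux_contOn (aux_ind_nonneg hp A) (aux_sumS hgρ A)
        have h2 : ContinuousOn (fun x => auxT p A x) (Icc 0 ρ) :=
          aux_contOn hindnnA (aux_sumT hG1sum A)
        have h3 : ContinuousOn (fun x => auxG p x) (Icc 0 ρ) := aux_contOn hp hgρ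
        have h4 : ContinuousOn (fun x => auxG1 p x) (Icc 0 ρ) :=
          aux_contOn (fun k => mul_nonneg (Nat.cast_nonneg k) (hp k))
            (hG1sum.congr fun k => by ring)
        exact ((h2.mono hsub1).mul (continuousOn_id.sub (h3.mono hsub1))).sub
          ((h1.mono hsub1).mul (continuousOn_id.sub (h4.mono hsub1)))
      have hH1 : auxT p A 1 * (1 - auxG p 1) - auxS p A 1 * (1 - auxG1 p 1) < 0 := by
        rw [hG_one, hG1_one]
        have hS1pos : 0 < auxS p A 1 := aux_SA_pos hp one_pos hρ1.le hgρ hA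
        have : 0 < auxS p A 1 * (1 - ∑' k : ℕ, (k:ℝ) * p k) := by
          apply mul_pos hS1pos; linarith [hsub]
        simp only [sub_self, mul_zero]
        linarith
      have hHρ : 0 ≤ auxT p A ρ * (ρ - auxG p ρ) - auxS p A ρ * (ρ - auxG1 p ρ) := by
        rw [div_le_div_iff₀ (by linarith) hSρpos] at hth
        linarith
      obtain ⟨θ0, hθ0mem, hθ0eq⟩ := intermediate_value_Icc hρ1.le hHcont ⟨hH1.le, hHρ⟩
      replace hθ0eq : auxT p A θ0 * (θ0 - auxG p θ0) - auxS p A θ0 * (θ0 - auxG1 p θ0) = 0 :=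
        hθ0eq
      have hθ0gt1 : 1 < θ0 := by
        rcases lt_or_eq_of_le hθ0mem.1 with h | h
        · exact h
        · exfalso; rw [← h] at hθ0eq; linarith
      have hθ0pos : (0:ℝ) < θ0 := by linarith
      have hθ0ρ : θ0 ≤ ρ := hθ0mem.2
      have hSθ0 : 0 < auxS p A θ0 := aux_SA_pos hp hθ0pos hθ0ρ hgρ hA
      obtain ⟨hsum1, hMform⟩ := aux_Mkey hp hgρ hG1sum A hθ0pos hθ0ρ hSθ0
      refine ⟨θ0, ⟨hθ0pos, ?_, hsum1⟩, ?_⟩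
      · -- nonnegativity of pMod
        intro k
        by_cases h : k ∈ A
        · rw [pMod, if_pos h]
          refine mul_nonneg (mul_nonneg ?_ (pow_nonneg hθ0pos.le k)) (hp k)
          rw [show cA p A θ0 = (θ0 - auxS p Aᶜ θ0) / (θ0 * auxS p A θ0) from
            (by rw [cA, aux_bridgeS, aux_bridgeS])]
          apply div_nonneg _ (mul_nonneg hθ0pos.le hSθ0.le)
          have hsplit := aux_splitS hθ0pos.le hθ0ρ hp hgρ A
          have hGθ0 : auxG p θ0 < θ0 := aux_G_lt hp hρ1 hθ0gt1 hθ0ρ hpsum hgρ hGρlt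
          linarith
        · rw [pMod, if_neg h]
          exact mul_nonneg (zpow_pos hθ0pos _).le (hp k)
      · -- the mean equals 1
        have : (∑' k : ℕ, (k:ℝ) * pMod p A θ0 k) - 1 = 0 := by
          rw [hMform, hθ0eq, zero_div]
        linarith
  -- ===== assemble the three statements =====
  refine ⟨?_, ?_, ?_⟩
  · intro A hA
    rw [aux_bridgeT p A ρ, aux_bridgeS p A ρ, hTH]
    constructor
    · intro hne
      by_contra hnl
      push_neg at hnl
      exact hne ((hmain A hA).mpr hnl)
    · intro hlt hex
      exact absurd ((hmain A hA).mp hex) (not_le.mpr hlt)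
  · -- non-generic for {0}
    intro hex
    have hA0 : 0 < (∑' k : ℕ, ({0} : Set ℕ).indicator p k) := by
      rw [aux_tsum_singleton p 0]; exact hp0
    have h := (hmain {0} hA0).mp hex
    have hT0 : auxT p {0} ρ = 0 := by
      rw [auxT]
      have hz : ∀ k : ℕ, ((k:ℝ) * ({0} : Set ℕ).indicator p k) * ρ ^ k = 0 := by
        intro k
        cases k with
        | zero => simp
        | succ m =>
          rw [Set.indicator_of_notMem (by simp), mul_zero, zero_mul]
      rw [tsum_congr hz, tsum_zero]
    rw [hT0, zero_div] at h
    linarith [hTHpos]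
  · -- generic for {k}
    intro k hk hth
    have hA : 0 < (∑' j : ℕ, ({k} : Set ℕ).indicator p j) := by
      rw [aux_tsum_singleton p k]; exact hk
    have hXpos : 0 < p k * ρ ^ k := mul_pos hk (pow_pos hρ0 k)
    have hindk : ({k} : Set ℕ).indicator p k = p k :=
      Set.indicator_of_mem rfl p
    have hSval : auxS p {k} ρ = p k * ρ ^ k := by
      rw [auxS, tsum_eq_single k
        (fun j hj => by rw [Set.indicator_of_notMem (by simpa using hj), zero_mul]), hindk]
    have hTval : auxT p {k} ρ = (k:ℝ) * (p k * ρ ^ k) := by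
      rw [auxT, tsum_eq_single k
        (fun j hj => by rw [Set.indicator_of_notMem (by simpa using hj), mul_zero, zero_mul]),
        hindk]
      ring
    apply (hmain {k} hA).mpr
    rw [hSval, hTval, mul_div_cancel_right₀ _ hXpos.ne']
    rw [hTH] at hth
    have hkρ : (k:ℝ)/ρ ≤ (k:ℝ) := div_le_self (Nat.cast_nonneg k) hρ1.le
    linarith
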